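/- Let A be an S-ring over a finite abelian group G of order n, X a basic set of A, and m an integer coprime to n. Then X^{(m)} = {x^m : x ∈ X} is also a basic set of A. -/

import Mathlib

open scoped BigOperators Pointwise Classical

noncomputable section

/-- The group-ring element `X̄ = Σ_{x∈X} x` in `ℤG`. -/
def ind {G : Type*} [Group G] (X : Finset G) : MonoidAlgebra ℤ G :=
  ∑ x ∈ X, MonoidAlgebra.single x 1

/-- The ℤ-span of the class sums of the members of `S`. -/
def spanA {G : Type*} [Group G] (S : Finset (Finset G)) :
    Submodule ℤ (MonoidAlgebra ℤ G) :=
  Submodule.span ℤ (ind '' (S : Set (Finset G)))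

/-- `S` is the partition of basic sets of an S-ring over `G`. -/
structure IsSRing {G : Type*} [Group G] (S : Finset (Finset G)) : Prop where
  cover : ∀ g : G, ∃ X ∈ S, g ∈ X
  disj : ∀ X ∈ S, ∀ Y ∈ S, X ≠ Y → Disjoint X Y
  nonempty : ∀ X ∈ S, X.Nonempty
  one_mem : ({1} : Finset G) ∈ S
  inv_mem : ∀ X ∈ S, X.image (·⁻¹) ∈ S
  mul_closed : ∀ a ∈ spanA S, ∀ b ∈ spanA S, a * b ∈ spanA S

/-- `X` is an `A`-set: its class sum lies in the span of the basic class sums. -/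
def IsASet {G : Type*} [Group G] (S : Finset (Finset G)) (X : Finset G) : Prop :=
  ind X ∈ spanA S

/-- The finset underlying a subgroup of a finite group. -/
def subgroupFinset {G : Type*} [Group G] [Fintype G] (H : Subgroup G) : Finset G :=
  Finset.univ.filter (· ∈ H)

/-- `H` is an `A`-subgroup. -/
def IsASubgroup {G : Type*} [Group G] [Fintype G] (S : Finset (Finset G))
    (H : Subgroup G) : Prop :=
  IsASet S (subgroupFinset H)

/-- The radical `rad(X) = {g : gX = Xg = X}` as a subgroup. -/
def radSubgroup {G : Type*} [Group G] (X : Finset G) : Subgroup G where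
  carrier := {g : G | X.image (g * ·) = X ∧ X.image (· * g) = X}
  one_mem' := by
    constructor <;> · simp only [one_mul, mul_one]; exact Finset.image_id
  mul_mem' := by
    rintro a b ⟨ha1, ha2⟩ ⟨hb1, hb2⟩
    constructor
    · have : X.image (a * b * ·) = (X.image (b * ·)).image (a * ·) := by
        rw [Finset.image_image]
        exact Finset.image_congr (fun x _ => by simp [mul_assoc])
      rw [this, hb1, ha1]
    · have : X.image (· * (a * b)) = (X.image (· * a)).image (· * b) := by
        rw [Finset.image_image]
        exact Finset.image_congr (fun x _ => by simp [mul_assoc])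
      rw [this, ha2, hb2]
  inv_mem' := by
    rintro a ⟨ha1, ha2⟩
    constructor
    · have := congrArg (Finset.image (a⁻¹ * ·)) ha1
      rw [Finset.image_image] at this
      have h2 : X.image ((a⁻¹ * ·) ∘ (a * ·)) = X := by
        rw [show ((a⁻¹ * ·) ∘ (a * ·)) = id by funext x; simp, Finset.image_id]
      rw [← this, h2]
    · have := congrArg (Finset.image (· * a⁻¹)) ha2
      rw [Finset.image_image] at this
      have h2 : X.image ((· * a⁻¹) ∘ (· * a)) = X := by
        rw [show ((· * a⁻¹) ∘ (· * a)) = id by funext x; simp, Finset.image_id]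
      rw [← this, h2]

end

set_option linter.unusedSectionVars false

section Aux

variable {G : Type*} [CommGroup G]

lemma sum_single_apply {R : Type*} [Semiring R] (X : Finset G) (g : G) :
    (∑ x ∈ X, MonoidAlgebra.single x (1 : R)).coeff g = if g ∈ X then 1 else 0 := by
  classical
  rw [MonoidAlgebra.coeff_sum, Finsupp.finset_sum_apply]
  simp only [MonoidAlgebra.coeff_single]
  rw [Finset.sum_congr rfl (fun x _ => Finsupp.single_apply (a := x) (b := (1:R)) (a' := g))]
  simp [Finset.sum_ite_eq]

lemma ind_apply (X : Finset G) (g : G) : (ind X).coeff g = if g ∈ X then 1 else 0 :=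
  sum_single_apply X g

lemma ind_injective : Function.Injective (ind (G := G)) := by
  intro X Y h
  ext g
  have : (ind X).coeff g = (ind Y).coeff g := by rw [h]
  rw [ind_apply, ind_apply] at this
  by_cases hX : g ∈ X <;> by_cases hY : g ∈ Y <;> simp_all

end Aux

section Aux2
variable {G : Type*} [CommGroup G]

lemma mem_spanA_iff {S : Finset (Finset G)} {a : MonoidAlgebra ℤ G} :
    a ∈ spanA S ↔ ∃ c : Finset G → ℤ, a = ∑ T ∈ S, c T • ind T := by
  classical
  have h1 : spanA S = Submodule.span ℤ ((S.image ind : Finset (MonoidAlgebra ℤ G)) : Set (MonoidAlgebra ℤ G)) := by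
    rw [spanA, Finset.coe_image]
  rw [h1, show ∀ x, x ∈ Submodule.span ℤ ((S.image ind : Finset (MonoidAlgebra ℤ G)) : Set (MonoidAlgebra ℤ G)) ↔ ∃ f : MonoidAlgebra ℤ G → ℤ, ∑ i ∈ S.image ind, f i • i = x from fun x => ⟨fun h => by obtain ⟨f, -, hf⟩ := Submodule.mem_span_finset.mp h; exact ⟨f, hf⟩, fun ⟨f, hf⟩ => hf ▸ Submodule.sum_mem _ fun i hi => Submodule.smul_mem _ _ (Submodule.subset_span hi)⟩]
  constructor
  · rintro ⟨f, hf⟩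
    refine ⟨fun T => f (ind T), ?_⟩
    rw [← hf, Finset.sum_image (fun x _ y _ h => ind_injective h)]
  · rintro ⟨c, hc⟩
    refine ⟨fun b => ∑ T ∈ S.filter (fun T => ind T = b), c T, ?_⟩
    rw [Finset.sum_image (fun x _ y _ h => ind_injective h), hc]
    refine Finset.sum_congr rfl (fun T hT => ?_)
    have : S.filter (fun T' => ind T' = ind T) = {T} := by
      ext U
      simp only [Finset.mem_filter, Finset.mem_singleton]
      constructor
      · rintro ⟨_, h⟩; exact ind_injective h
      · rintro rfl; exact ⟨hT, rfl⟩
    simp only [this, Finset.sum_singleton]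

end Aux2

section Aux3
variable {G : Type*} [CommGroup G]

/-- coefficient of a span-combination at a point of a basic set -/
lemma coeff_sum {R : Type*} [Ring R] {S : Finset (Finset G)}
    (hdisj : ∀ X ∈ S, ∀ Y ∈ S, X ≠ Y → Disjoint X Y)
    (c : Finset G → ℤ) {T₀ : Finset G} (hT₀ : T₀ ∈ S) {g : G} (hg : g ∈ T₀) :
    (∑ T ∈ S, c T • (∑ x ∈ T, MonoidAlgebra.single x (1 : R))).coeff g = c T₀ • (1 : R) := by
  classical
  rw [MonoidAlgebra.coeff_sum, Finsupp.finset_sum_apply]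
  rw [Finset.sum_eq_single T₀]
  · rw [MonoidAlgebra.coeff_smul_apply, sum_single_apply, if_pos hg]
  · intro T hT hne
    rw [MonoidAlgebra.coeff_smul_apply, sum_single_apply, if_neg, smul_zero]
    exact fun hgT => (Finset.disjoint_left.mp (hdisj T hT T₀ hT₀ hne) hgT) hg
  · exact fun h => absurd hT₀ h

/-- `Y` is a union of basic sets. -/
def good {G : Type*} [Group G] (S : Finset (Finset G)) (Y : Finset G) : Prop :=
  ∀ T ∈ S, ∀ g ∈ T, g ∈ Y → T ⊆ Y

end Aux3

section Aux4
variable {G : Type*} [CommGroup G] {S : Finset (Finset G)}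

lemma basic_isASet (hX : X' ∈ S) : IsASet S X' :=
  Submodule.subset_span ⟨X', hX, rfl⟩

lemma isASet_of_good (hS : IsSRing S) {Y : Finset G} (hY : good S Y) : IsASet S Y := by
  classical
  rw [IsASet, mem_spanA_iff]
  refine ⟨fun T => if (T ∩ Y).Nonempty then 1 else 0, ?_⟩
  refine MonoidAlgebra.coeff_injective (Finsupp.ext fun g => ?_)
  obtain ⟨T₀, hT₀, hgT₀⟩ := hS.cover g
  have hco : (∑ T ∈ S, (if (T ∩ Y).Nonempty then (1:ℤ) else 0) • ind T).coeff g
      = (if (T₀ ∩ Y).Nonempty then (1:ℤ) else 0) • (1:ℤ) :=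
    coeff_sum hS.disj _ hT₀ hgT₀
  rw [hco, ind_apply, smul_eq_mul, mul_one]
  by_cases hgY : g ∈ Y
  · rw [if_pos hgY, if_pos ⟨g, Finset.mem_inter.mpr ⟨hgT₀, hgY⟩⟩]
  · rw [if_neg hgY, if_neg]
    rintro ⟨h, hh⟩
    rw [Finset.mem_inter] at hh
    exact hgY (hY T₀ hT₀ h hh.1 hh.2 hgT₀)

end Aux4

section Aux5
variable {G : Type*} [CommGroup G] {S : Finset (Finset G)}

lemma good_of_isASet (hS : IsSRing S) {Y : Finset G} (hY : IsASet S Y) : good S Y := by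
  classical
  obtain ⟨c, hc⟩ := mem_spanA_iff.mp hY
  intro T hT g hg hgY g' hg'
  have h1 : (∑ U ∈ S, c U • ind U).coeff g = c T • (1:ℤ) := coeff_sum hS.disj c hT hg
  have h2 : (∑ U ∈ S, c U • ind U).coeff g' = c T • (1:ℤ) := coeff_sum hS.disj c hT hg'
  rw [← hc] at h1 h2
  rw [ind_apply, if_pos hgY] at h1
  rw [ind_apply] at h2
  by_cases hg'Y : g' ∈ Y
  · exact hg'Y
  · rw [if_neg hg'Y] at h2
    rw [← h2] at h1
    exact absurd h1 one_ne_zero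

lemma exists_pow_inv [Fintype G] {k : ℕ} (hk : Nat.Coprime k (Fintype.card G)) :
    ∃ k' : ℕ, Nat.Coprime k' (Fintype.card G) ∧ ∀ g : G, (g ^ k) ^ k' = g := by
  classical
  set n := Fintype.card G with hn
  haveI : NeZero n := ⟨Fintype.card_ne_zero⟩
  let u : (ZMod n)ˣ := ZMod.unitOfCoprime k hk
  refine ⟨((u⁻¹ : (ZMod n)ˣ) : ZMod n).val, ZMod.val_coe_unit_coprime u⁻¹, fun g => ?_⟩
  set k' := ((u⁻¹ : (ZMod n)ˣ) : ZMod n).val with hk'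
  have hmod : (k * k' : ℕ) ≡ 1 [MOD n] := by
    have : ((k * k' : ℕ) : ZMod n) = ((1 : ℕ) : ZMod n) := by
      push_cast
      rw [hk', ZMod.natCast_val, ZMod.cast_id]
      show (u : ZMod n) * ((u⁻¹ : (ZMod n)ˣ) : ZMod n) = 1
      rw [← Units.val_mul, mul_inv_cancel, Units.val_one]
    exact (ZMod.natCast_eq_natCast_iff _ _ _).mp this
  have hord : g ^ (k * k') = g ^ 1 := by
    rw [pow_eq_pow_iff_modEq]
    exact Nat.ModEq.of_dvd (orderOf_dvd_card) hmod
  rw [← pow_mul, hord, pow_one]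

lemma pow_coprime_inj [Fintype G] {k : ℕ} (hk : Nat.Coprime k (Fintype.card G)) :
    Function.Injective (fun g : G => g ^ k) := by
  obtain ⟨k', _, hkk'⟩ := exists_pow_inv hk
  intro a b hab
  have := congrArg (· ^ k') hab
  simpa [hkk'] using this

end Aux5

section Aux6
variable {G : Type*} [CommGroup G] {S : Finset (Finset G)}

lemma spanA_pow (hS : IsSRing S) {a : MonoidAlgebra ℤ G} (ha : a ∈ spanA S) (k : ℕ) :
    a ^ k ∈ spanA S := by
  induction k with
  | zero =>
    rw [pow_zero]
    have : (1 : MonoidAlgebra ℤ G) = ind {1} := by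
      rw [ind, Finset.sum_singleton]; rfl
    rw [this]
    exact basic_isASet hS.one_mem
  | succ k ih =>
    rw [pow_succ]
    exact hS.mul_closed _ ih _ ha

lemma prime_step [Fintype G] (hS : IsSRing S) {p : ℕ} (hp : p.Prime)
    (hcop : Nat.Coprime p (Fintype.card G)) {Y : Finset G} (hY : IsASet S Y) :
    IsASet S (Y.image (· ^ p)) := by
  classical
  haveI : Fact p.Prime := ⟨hp⟩
  -- the coefficient-reduction ring hom
  let φ : MonoidAlgebra ℤ G →+* MonoidAlgebra (ZMod p) G :=
    MonoidAlgebra.liftNCRingHom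
      ((MonoidAlgebra.singleOneRingHom).comp (Int.castRingHom (ZMod p)))
      (MonoidAlgebra.of (ZMod p) G) (fun _ _ => Commute.all _ _)
  have hφ : ∀ (x : G) (c : ℤ), φ (MonoidAlgebra.single x c) =
      MonoidAlgebra.single x ((c : ZMod p)) := by
    intro x c
    show MonoidAlgebra.liftNC _ _ _ = _
    rw [MonoidAlgebra.liftNC_single]
    show MonoidAlgebra.single 1 ((c : ZMod p)) * MonoidAlgebra.single x 1 = _
    rw [MonoidAlgebra.single_mul_single, one_mul, mul_one]
  -- CharP p
  haveI : CharP (MonoidAlgebra (ZMod p) G) p := by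
    refine charP_of_injective_algebraMap (R := ZMod p) ?_ p
    intro a b hab
    have h : (MonoidAlgebra.single (1:G) a : MonoidAlgebra (ZMod p) G) = MonoidAlgebra.single (1:G) b := hab
    exact Finsupp.single_injective (1:G) (congrArg MonoidAlgebra.coeff h)
  -- a = ind Y ^ p  lies in spanA
  obtain ⟨c, hc⟩ := mem_spanA_iff.mp (spanA_pow hS hY p)
  -- φ (ind Y ^ p) = ∑_{y ∈ Y^{(p)}} single y 1
  have hφind : ∀ (Z : Finset G), φ (ind Z) = ∑ x ∈ Z, MonoidAlgebra.single x (1 : ZMod p) := by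
    intro Z
    rw [ind, map_sum]
    exact Finset.sum_congr rfl (fun x _ => (hφ x 1).trans (by rw [Int.cast_one]))
  have key : φ (ind Y ^ p) = ∑ y ∈ Y.image (· ^ p), MonoidAlgebra.single y (1 : ZMod p) := by
    rw [map_pow, hφind, sum_pow_char]
    have h5 : ∀ x ∈ Y, (MonoidAlgebra.single x (1:ZMod p)) ^ p
        = MonoidAlgebra.single (x ^ p) (1:ZMod p) := by
      intro x _
      rw [MonoidAlgebra.single_pow, one_pow]
    rw [Finset.sum_congr rfl h5,
      Finset.sum_image (fun a _ b _ h => pow_coprime_inj hcop h)]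
  -- the other expansion
  have key2 : φ (ind Y ^ p) = ∑ T ∈ S, c T • (∑ x ∈ T, MonoidAlgebra.single x (1 : ZMod p)) := by
    rw [hc, map_sum]
    refine Finset.sum_congr rfl (fun T _ => ?_)
    rw [map_zsmul, hφind]
  suffices hgood : good S (Y.image (· ^ p)) from isASet_of_good hS hgood
  intro T hT g hg hgY g' hg'
  have e1 : (φ (ind Y ^ p)).coeff g = (1 : ZMod p) := by
    rw [key, sum_single_apply, if_pos hgY]
  have e2 : (φ (ind Y ^ p)).coeff g = c T • (1 : ZMod p) := by
    rw [key2]; exact coeff_sum hS.disj c hT hg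
  have e3 : (φ (ind Y ^ p)).coeff g' = c T • (1 : ZMod p) := by
    rw [key2]; exact coeff_sum hS.disj c hT hg'
  by_contra hg'Y
  have e4 : (φ (ind Y ^ p)).coeff g' = (0 : ZMod p) := by
    rw [key, sum_single_apply, if_neg hg'Y]
  rw [e4] at e3
  rw [e2, ← e3] at e1
  exact one_ne_zero e1.symm

end Aux6

section Aux7
variable {G : Type*} [CommGroup G] {S : Finset (Finset G)}

lemma nat_step [Fintype G] (hS : IsSRing S) :
    ∀ k : ℕ, 1 ≤ k → Nat.Coprime k (Fintype.card G) →
      ∀ Y : Finset G, IsASet S Y → IsASet S (Y.image (· ^ k)) := by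
  intro k
  induction k using Nat.strong_induction_on with
  | _ k ih =>
    intro hk1 hkcop Y hY
    rcases eq_or_lt_of_le hk1 with h1 | h2
    · have : Y.image (· ^ k) = Y := by
        rw [← h1]
        simp [pow_one, Finset.image_id]
      rwa [this]
    · -- k ≥ 2
      have hkne : k ≠ 1 := by omega
      set p := k.minFac with hp
      have hpp : p.Prime := Nat.minFac_prime hkne
      have hpd : p ∣ k := Nat.minFac_dvd k
      set k' := k / p with hk'
      have hkk : k = k' * p := (Nat.div_mul_cancel hpd).symm
      have hk'lt : k' < k := Nat.div_lt_self (by omega) hpp.two_le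
      have hk'1 : 1 ≤ k' := Nat.one_le_iff_ne_zero.mpr (by
        intro h0
        rw [h0] at hkk
        omega)
      have hk'cop : Nat.Coprime k' (Fintype.card G) :=
        Nat.Coprime.coprime_dvd_left ⟨p, hkk⟩ hkcop
      have hpcop : Nat.Coprime p (Fintype.card G) :=
        Nat.Coprime.coprime_dvd_left hpd hkcop
      have himg : Y.image (· ^ k) = (Y.image (· ^ k')).image (· ^ p) := by
        rw [Finset.image_image]
        refine Finset.image_congr (fun x _ => ?_)
        show x ^ k = (x ^ k') ^ p
        rw [← pow_mul, ← hkk]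
      rw [himg]
      exact prime_step hS hpp hpcop (ih k' hk'lt hk'1 hk'cop Y hY)

lemma int_coprime_reduce [Fintype G] {m : ℤ} (hm : Int.gcd m (Fintype.card G) = 1)
    (hn : 1 < Fintype.card G) :
    ∃ k : ℕ, 1 ≤ k ∧ Nat.Coprime k (Fintype.card G) ∧ ∀ g : G, g ^ m = g ^ k := by
  set n := Fintype.card G with hndef
  have hn0 : (0:ℤ) < (n:ℤ) := by exact_mod_cast Nat.lt_trans Nat.zero_lt_one hn
  set k := (m % (n:ℤ)).toNat with hk
  have hknn : (0:ℤ) ≤ m % (n:ℤ) := Int.emod_nonneg m (by omega)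
  have hkcast : (k : ℤ) = m % (n:ℤ) := Int.toNat_of_nonneg hknn
  have hdvd : ∀ d : ℕ, d ∣ k → d ∣ n → d ∣ Int.gcd m n := by
    intro d hdk hdn
    have h1 : (d:ℤ) ∣ m % (n:ℤ) := hkcast ▸ Int.natCast_dvd_natCast.mpr hdk
    have h2 : (d:ℤ) ∣ (n:ℤ) := Int.natCast_dvd_natCast.mpr hdn
    have h3 : (d:ℤ) ∣ m := by
      have := Int.emod_add_mul_ediv m (n:ℤ)
      calc (d:ℤ) ∣ m % (n:ℤ) + (n:ℤ) * (m / (n:ℤ)) := dvd_add h1 (Dvd.dvd.mul_right h2 _)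
        _ = m := this
    exact Int.natCast_dvd_natCast.mp (Int.dvd_coe_gcd h3 h2)
  have hkcop : Nat.Coprime k n := by
    have := hdvd (Nat.gcd k n) (Nat.gcd_dvd_left _ _) (Nat.gcd_dvd_right _ _)
    rw [hm] at this
    exact Nat.dvd_one.mp this
  have hk1 : 1 ≤ k := by
    rcases Nat.eq_zero_or_pos k with h0 | h1
    · exfalso
      have : (n:ℤ) ∣ m := by
        have : m % (n:ℤ) = 0 := by
          rw [← hkcast, h0]; rfl
        exact Int.dvd_of_emod_eq_zero this
      have h4 : n ∣ m.natAbs := by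
        have h5 := Int.natAbs_dvd_natAbs.mpr this
        simpa using h5
      have h5 : n ∣ Int.gcd m (n:ℤ) := Nat.dvd_gcd h4 (by simp [Int.gcd])
      rw [hm] at h5
      exact absurd (Nat.dvd_one.mp h5) (by omega)
    · exact h1
  refine ⟨k, hk1, hkcop, fun g => ?_⟩
  have hg1 : g ^ ((n:ℕ) : ℤ) = 1 := by
    rw [zpow_natCast, pow_card_eq_one]
  calc g ^ m = g ^ ((n:ℤ) * (m / (n:ℤ)) + m % (n:ℤ)) := by rw [Int.mul_ediv_add_emod]
    _ = (g ^ ((n:ℕ):ℤ)) ^ (m / (n:ℤ)) * g ^ (m % (n:ℤ)) := by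
        rw [zpow_add, zpow_mul]
    _ = g ^ (m % (n:ℤ)) := by rw [hg1, one_zpow, one_mul]
    _ = g ^ ((k:ℕ):ℤ) := by rw [hkcast]
    _ = g ^ (k:ℕ) := zpow_natCast g k

end Aux7

/-- Schur's multiplier theorem: over a finite abelian group of
order `n`, if `X` is a basic set and `gcd(m, n) = 1`, then `X^{(m)}` is basic. -/
theorem stmt5 {G : Type*} [CommGroup G] [Fintype G] (S : Finset (Finset G))
    (hS : IsSRing S) (X : Finset G) (hX : X ∈ S) (m : ℤ)
    (hm : Int.gcd m (Fintype.card G) = 1) :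
    X.image (· ^ m) ∈ S := by
  by_cases hcard : Fintype.card G ≤ 1
  · have hsub : Subsingleton G := Fintype.card_le_one_iff_subsingleton.mp hcard
    have h : X.image (· ^ m) = X := by
      have h1 : X.image (· ^ m) = X.image id :=
        Finset.image_congr (fun x _ => @Subsingleton.elim G hsub _ _)
      rw [h1, Finset.image_id]
    rwa [h]
  · push_neg at hcard
    obtain ⟨k, hk1, hkcop, hpow⟩ := int_coprime_reduce hm hcard
    have himg : X.image (· ^ m) = X.image (· ^ k) :=
      Finset.image_congr (fun x _ => hpow x)
    rw [himg]
    obtain ⟨k', hk'cop, hkk'⟩ := exists_pow_inv hkcop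
    have hk'1 : 1 ≤ k' := by
      rcases Nat.eq_zero_or_pos k' with h0 | h1
    
      · exfalso
        rw [h0] at hk'cop
        have : Fintype.card G = 1 := by
          have := hk'cop
          rwa [Nat.coprime_zero_left] at this
        omega
      · exact h1
    have A1 : IsASet S (X.image (· ^ k)) := nat_step hS k hk1 hkcop X (basic_isASet hX)
    obtain ⟨x0, hx0⟩ := hS.nonempty X hX
    have hg0 : x0 ^ k ∈ X.image (· ^ k) := Finset.mem_image_of_mem _ hx0
    obtain ⟨T, hT, hg0T⟩ := hS.cover (x0 ^ k)
    have hTsub : T ⊆ X.image (· ^ k) := good_of_isASet hS A1 T hT _ hg0T hg0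
    have A2 : IsASet S (T.image (· ^ k')) := nat_step hS k' hk'1 hk'cop T (basic_isASet hT)
    have hsub2 : T.image (· ^ k') ⊆ X := by
      intro y hy
      obtain ⟨t, ht, rfl⟩ := Finset.mem_image.mp hy
      obtain ⟨x, hx, hxe⟩ := Finset.mem_image.mp (hTsub ht)
      have : (t : G) ^ k' = x := by
        show t ^ k' = x
        calc t ^ k' = (x ^ k) ^ k' := by rw [hxe]
          _ = x := hkk' x
      rwa [this]
    obtain ⟨t0, ht0⟩ := hS.nonempty T hT
    have hmem : t0 ^ k' ∈ X := hsub2 (Finset.mem_image_of_mem _ ht0)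
    have hXsub : X ⊆ T.image (· ^ k') :=
      good_of_isASet hS A2 X hX _ hmem (Finset.mem_image_of_mem _ ht0)
    have hXeq : X = T.image (· ^ k') := Finset.Subset.antisymm hXsub hsub2
    rw [hXeq, Finset.image_image]
    have hid : T.image ((· ^ k) ∘ (· ^ k')) = T := by
      refine (Finset.image_congr (fun t _ => ?_)).trans Finset.image_id
      show (t ^ k') ^ k = t
      rw [← pow_mul, mul_comm, pow_mul]
      exact hkk' t
    rwa [hid]
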